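/- In the group G_2 = ⟨x, y | x y^{-1} x^{-1} y x = y^{-2} x y x^{-1} y^{-1} x y^2⟩, the image of [y,x] in the quotient γ_2(G_2)/γ_3(G_2) satisfies [y,x]^4 = 1; consequently γ_2(G_2)/γ_3(G_2) is a cyclic group of order dividing 4. -/

import Mathlib

open scoped commutatorElement

section Helpers
variable {H : Type*} [Group H]

lemma cen_mul_left (hcen : ∀ a b g : H, Commute ⁅a, b⁆ g) (a b h : H) :
    ⁅a * b, h⁆ = ⁅a, h⁆ * ⁅b, h⁆ := by
  have h1 : ⁅a * b, h⁆ = a * ⁅b, h⁆ * a⁻¹ * ⁅a, h⁆ := by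
    simp only [commutatorElement_def]; group
  rw [h1, ← (hcen b h a).eq, mul_assoc ⁅b,h⁆, mul_inv_cancel, mul_one, (hcen b h ⁅a,h⁆).eq]

lemma cen_inv_left (hcen : ∀ a b g : H, Commute ⁅a, b⁆ g) (a h : H) :
    ⁅a⁻¹, h⁆ = ⁅a, h⁆⁻¹ := by
  have h1 : ⁅a⁻¹, h⁆ = a⁻¹ * (⁅a, h⁆⁻¹ * a) := by
    simp only [commutatorElement_def]; group
  rw [h1, ((hcen a h a).inv_left).eq, inv_mul_cancel_left]

lemma cen_mul_right (hcen : ∀ a b g : H, Commute ⁅a, b⁆ g) (a h k : H) :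
    ⁅a, h * k⁆ = ⁅a, h⁆ * ⁅a, k⁆ := by
  calc ⁅a, h * k⁆ = ⁅h * k, a⁆⁻¹ := (commutatorElement_inv _ _).symm
    _ = (⁅h, a⁆ * ⁅k, a⁆)⁻¹ := by rw [cen_mul_left hcen]
    _ = ⁅k, a⁆⁻¹ * ⁅h, a⁆⁻¹ := mul_inv_rev _ _
    _ = ⁅a, k⁆ * ⁅a, h⁆ := by rw [commutatorElement_inv, commutatorElement_inv]
    _ = ⁅a, h⁆ * ⁅a, k⁆ := ((hcen a h ⁅a, k⁆).eq).symm

lemma cen_inv_right (hcen : ∀ a b g : H, Commute ⁅a, b⁆ g) (a h : H) :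
    ⁅a, h⁻¹⁆ = ⁅a, h⁆⁻¹ := by
  calc ⁅a, h⁻¹⁆ = ⁅h⁻¹, a⁆⁻¹ := (commutatorElement_inv _ _).symm
    _ = (⁅h, a⁆⁻¹)⁻¹ := by rw [cen_inv_left hcen]
    _ = ⁅h, a⁆ := inv_inv _
    _ = ⁅a, h⁆⁻¹ := (commutatorElement_inv _ _).symm

lemma cen_inv_inv (hcen : ∀ a b g : H, Commute ⁅a, b⁆ g) (a h : H) :
    ⁅a⁻¹, h⁻¹⁆ = ⁅a, h⁆ := by
  rw [cen_inv_left hcen, cen_inv_right hcen, inv_inv]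

lemma key4 (hcen : ∀ a b g : H, Commute ⁅a, b⁆ g) (X Y : H)
    (hrel : X * Y⁻¹ * X⁻¹ * Y * X = Y⁻¹ * Y⁻¹ * X * Y * X⁻¹ * Y⁻¹ * X * Y * Y) :
    ⁅Y, X⁆ ^ 4 = 1 := by
  have hYXY : Y⁻¹ * X * Y = X * ⁅X, Y⁆ := by
    rw [← cen_inv_inv hcen X Y]; simp only [commutatorElement_def]; group
  have e1 : X * Y⁻¹ * X⁻¹ * Y * X = X * ⁅Y, X⁆ := by
    rw [← cen_inv_inv hcen Y X]; simp only [commutatorElement_def]; group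
  have hdd : Y⁻¹ * (⁅X,Y⁆ * ⁅X,Y⁆) * Y = ⁅X,Y⁆ * ⁅X,Y⁆ := by
    rw [mul_assoc, ((hcen X Y Y).mul_left (hcen X Y Y)).eq, inv_mul_cancel_left]
  have e2 : Y⁻¹ * Y⁻¹ * X * Y * X⁻¹ * Y⁻¹ * X * Y * Y
      = X * (⁅X,Y⁆ * ⁅X,Y⁆ * ⁅X,Y⁆) := by
    calc Y⁻¹ * Y⁻¹ * X * Y * X⁻¹ * Y⁻¹ * X * Y * Y
        = Y⁻¹ * ((Y⁻¹ * X * Y) * ⁅X⁻¹, Y⁻¹⁆) * Y := by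
          simp only [commutatorElement_def]; group
      _ = Y⁻¹ * (X * ⁅X,Y⁆ * ⁅X,Y⁆) * Y := by rw [cen_inv_inv hcen, hYXY]
      _ = (Y⁻¹ * X * Y) * (Y⁻¹ * (⁅X,Y⁆ * ⁅X,Y⁆) * Y) := by group
      _ = X * ⁅X,Y⁆ * (⁅X,Y⁆ * ⁅X,Y⁆) := by rw [hYXY, hdd]
      _ = X * (⁅X,Y⁆ * ⁅X,Y⁆ * ⁅X,Y⁆) := by group
  have h3 : ⁅Y, X⁆ = ⁅X, Y⁆ * ⁅X, Y⁆ * ⁅X, Y⁆ := by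
    have h := hrel
    rw [e1, e2] at h
    exact mul_left_cancel h
  have hda : ⁅X, Y⁆ * ⁅Y, X⁆ = 1 := by
    simp only [commutatorElement_def]; group
  have h4 : ⁅X, Y⁆ ^ 4 = 1 := by
    rw [pow_succ', pow_succ, pow_succ, pow_one, ← h3]; exact hda
  rw [← commutatorElement_inv, inv_pow, h4, inv_one]

end Helpers

namespace Stmt2

abbrev F := FreeGroup (Fin 2)

def x : F := FreeGroup.of 0
def y : F := FreeGroup.of 1

def R : F :=
  x * y⁻¹ * x⁻¹ * y * x * (y⁻¹ * y⁻¹ * x * y * x⁻¹ * y⁻¹ * x * y * y)⁻¹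

abbrev G2 := PresentedGroup ({R} : Set F)

def xg : G2 := PresentedGroup.of 0
def yg : G2 := PresentedGroup.of 1

/-- `[y,x] = y⁻¹ x⁻¹ y x` in `G₂`. -/
def c : G2 := yg⁻¹ * xg⁻¹ * yg * xg

/-- `γ₂(G₂) = lowerCentralSeries G₂ 1`, `γ₃(G₂) = lowerCentralSeries G₂ 2`. -/
abbrev γ₂ : Subgroup G2 := (⊤ : Subgroup G2).lowerCentralSeries 1
abbrev γ₃ : Subgroup G2 := (⊤ : Subgroup G2).lowerCentralSeries 2

instance : (γ₃.subgroupOf γ₂).Normal :=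
  Subgroup.Normal.subgroupOf inferInstance _

/-- The quotient `γ₂(G₂)/γ₃(G₂)`. -/
abbrev Q := γ₂ ⧸ (γ₃.subgroupOf γ₂)

-- the quotient group `G₂ / γ₃`
abbrev N := G2 ⧸ (γ₃ : Subgroup G2)

noncomputable abbrev π : G2 →* N := QuotientGroup.mk' (γ₃ : Subgroup G2)

lemma pi_surj : Function.Surjective (π : G2 →* N) := QuotientGroup.mk'_surjective _

lemma mem_gamma2 (a b : G2) : ⁅a, b⁆ ∈ γ₂ :=
  Subgroup.commutator_mem_commutator (Subgroup.mem_top a) (Subgroup.mem_top b)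

lemma mem_gamma3 (a b g : G2) : ⁅⁅a, b⁆, g⁆ ∈ γ₃ :=
  Subgroup.commutator_mem_commutator (mem_gamma2 a b) (Subgroup.mem_top g)

lemma hcenN : ∀ a b g : N, Commute ⁅a, b⁆ g := by
  intro a b g
  obtain ⟨a, rfl⟩ := pi_surj a
  obtain ⟨b, rfl⟩ := pi_surj b
  obtain ⟨g, rfl⟩ := pi_surj g
  rw [← commutatorElement_eq_one_iff_commute, ← map_commutatorElement,
    ← map_commutatorElement]
  rw [QuotientGroup.mk'_apply, QuotientGroup.eq_one_iff]
  exact mem_gamma3 a b g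

-- the relation in G2
lemma hrelG2_aux (f : F →* G2) (h1 : f R = 1) (hx : f x = xg) (hy : f y = yg) :
    xg * yg⁻¹ * xg⁻¹ * yg * xg
    = yg⁻¹ * yg⁻¹ * xg * yg * xg⁻¹ * yg⁻¹ * xg * yg * yg := by
  change f (x * y⁻¹ * x⁻¹ * y * x * (y⁻¹ * y⁻¹ * x * y * x⁻¹ * y⁻¹ * x * y * y)⁻¹) = 1 at h1
  simp only [map_mul, map_inv, hx, hy, mul_inv_eq_one] at h1
  exact h1

lemma hrelG2 : xg * yg⁻¹ * xg⁻¹ * yg * xg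
    = yg⁻¹ * yg⁻¹ * xg * yg * xg⁻¹ * yg⁻¹ * xg * yg * yg := by
  refine hrelG2_aux (PresentedGroup.mk ({R} : Set F)) ?_ rfl rfl
  exact PresentedGroup.mk_eq_one_iff.mpr (Subgroup.subset_normalClosure (Set.mem_singleton R))

noncomputable def X : N := π xg
noncomputable def Y : N := π yg

lemma hrelN : X * Y⁻¹ * X⁻¹ * Y * X
    = Y⁻¹ * Y⁻¹ * X * Y * X⁻¹ * Y⁻¹ * X * Y * Y := by
  have := congrArg (π : G2 →* N) hrelG2
  simpa only [map_mul, map_inv, X, Y] using this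

lemma hgenN : ∀ g : N, g ∈ Subgroup.closure ({X, Y} : Set N) := by
  intro g
  obtain ⟨g, rfl⟩ := pi_surj g
  refine PresentedGroup.generated_by _ ((Subgroup.closure ({X, Y} : Set N)).comap π) ?_ g
  intro j
  fin_cases j
  · exact Subgroup.subset_closure (Set.mem_insert _ _)
  · exact Subgroup.subset_closure (Set.mem_insert_of_mem _ rfl)

noncomputable abbrev Z : Subgroup N := Subgroup.zpowers ⁅Y, X⁆

lemma base_mem : ∀ u ∈ ({X, Y} : Set N), ∀ v ∈ ({X, Y} : Set N), ⁅u, v⁆ ∈ Z := by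
  rintro u (rfl | rfl) v (rfl | rfl)
  · rw [commutatorElement_eq_one_iff_commute.mpr (Commute.refl _)]; exact one_mem _
  · rw [← commutatorElement_inv]; exact inv_mem (Subgroup.mem_zpowers _)
  · exact Subgroup.mem_zpowers _
  · rw [commutatorElement_eq_one_iff_commute.mpr (Commute.refl _)]; exact one_mem _

lemma step1 : ∀ v ∈ ({X, Y} : Set N), ∀ a : N, ⁅a, v⁆ ∈ Z := by
  intro v hv a
  refine Subgroup.closure_induction (fun u hu => base_mem u hu v hv)
    ?_ (fun p q _ _ ihp ihq => ?_) (fun p _ ihp => ?_) (hgenN a)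
  · rw [commutatorElement_one_left]; exact one_mem _
  · rw [cen_mul_left hcenN]; exact mul_mem ihp ihq
  · rw [cen_inv_left hcenN]; exact inv_mem ihp

lemma memZ : ∀ a b : N, ⁅a, b⁆ ∈ Z := by
  intro a b
  refine Subgroup.closure_induction (fun v hv => step1 v hv a)
    ?_ (fun p q _ _ ihp ihq => ?_) (fun p _ ihp => ?_) (hgenN b)
  · rw [commutatorElement_one_right]; exact one_mem _
  · rw [cen_mul_right hcenN]; exact mul_mem ihp ihq
  · rw [cen_inv_right hcenN]; exact inv_mem ihp

lemma pi_c : π c = ⁅Y, X⁆ := by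
  rw [c]
  simp only [map_mul, map_inv]
  rw [← cen_inv_inv hcenN Y X]
  simp only [commutatorElement_def, inv_inv]
  rfl

lemma gamma2_image (g : G2) (hg : g ∈ γ₂) : π g ∈ Z := by
  have hle : ⁅(⊤ : Subgroup G2), (⊤ : Subgroup G2)⁆ ≤ Z.comap (π : G2 →* N) := by
    rw [Subgroup.commutator_le]
    intro a _ b _
    rw [Subgroup.mem_comap, map_commutatorElement]
    exact memZ _ _
  exact hle hg

lemma c_mem_gamma2 : c ∈ γ₂ := by
  have : c = ⁅yg⁻¹, xg⁻¹⁆ := by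
    rw [c, commutatorElement_def, inv_inv, inv_inv]
  rw [this]; exact mem_gamma2 _ _

lemma c4_mem : c ^ 4 ∈ γ₃ := by
  have h4 : ⁅Y, X⁆ ^ 4 = 1 := key4 hcenN X Y hrelN
  have : π (c ^ 4) = 1 := by rw [map_pow, pi_c, h4]
  rwa [QuotientGroup.mk'_apply, QuotientGroup.eq_one_iff] at this

noncomputable def q₀ : Q := QuotientGroup.mk ⟨c, c_mem_gamma2⟩

lemma q₀_gen : ∀ q : Q, q ∈ Subgroup.zpowers q₀ := by
  intro q
  obtain ⟨⟨g, hg⟩, rfl⟩ := QuotientGroup.mk_surjective q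
  have : π g ∈ Z := gamma2_image g hg
  obtain ⟨n, hn⟩ := this
  have hn' : ⁅Y, X⁆ ^ n = π g := hn
  rw [← pi_c] at hn'
  refine ⟨n, ?_⟩
  have hmem : ((c ^ n)⁻¹ * g) ∈ (γ₃ : Subgroup G2) := by
    have h1 : π ((c ^ n)⁻¹ * g) = 1 := by
      rw [map_mul, map_inv, map_zpow, hn', inv_mul_cancel]
    rwa [QuotientGroup.mk'_apply, QuotientGroup.eq_one_iff] at h1
  show q₀ ^ n = QuotientGroup.mk ⟨g, hg⟩
  rw [q₀, ← QuotientGroup.mk_zpow, QuotientGroup.eq]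
  have hval : ((((⟨c, c_mem_gamma2⟩ : γ₂) ^ n)⁻¹ * ⟨g, hg⟩ : γ₂) : G2)
      = (c ^ n)⁻¹ * g := by rfl
  rw [Subgroup.mem_subgroupOf, hval]
  exact hmem

lemma q₀_pow4 : q₀ ^ 4 = 1 := by
  rw [q₀, ← QuotientGroup.mk_pow, QuotientGroup.eq_one_iff]
  have hval : ((((⟨c, c_mem_gamma2⟩ : γ₂) ^ 4) : γ₂) : G2) = c ^ 4 := by rfl
  rw [Subgroup.mem_subgroupOf, hval]
  exact c4_mem

theorem gamma2_mod_gamma3 :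
    c ^ 4 ∈ γ₃ ∧ IsCyclic Q ∧ ∀ q : Q, q ^ 4 = 1 := by
  refine ⟨c4_mem, ⟨⟨q₀, q₀_gen⟩⟩, ?_⟩
  intro q
  obtain ⟨n, rfl⟩ := q₀_gen q
  rw [← zpow_natCast, ← zpow_mul, mul_comm, zpow_mul, zpow_natCast, q₀_pow4, one_zpow]

end Stmt2
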